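/- Let R be the integral operator on L²[0,1] with kernel R(t,s) = (α(t∨s) − β(t∨s))·f(t∧s)/f(t∨s) + f(t)·(∫_{t∨s}^1 (α(u)−β(u))²/f(u)² du)·f(s), where α, β are continuous and f continuous positive. Then R is a Hilbert–Schmidt (hence compact) trace-class operator with trace Tr(R) = ∫₀¹(α(t)−β(t))dt + ∫₀¹ (h(t)/f(t)²)·(α(t)−β(t))² dt, where h(t) = ∫₀ᵗ f(u)² du. -/

import Mathlib

open MeasureTheory

noncomputable section

/-- The kernel `R(t,s) = (α(t∨s) − β(t∨s))·f(t∧s)/f(t∨s)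
  + f(t)·(∫_{t∨s}^1 (α(u)−β(u))²/f(u)² du)·f(s)`. -/
def Rker (α β f : ℝ → ℝ) (t s : ℝ) : ℝ :=
  (α (max t s) - β (max t s)) * f (min t s) / f (max t s)
    + f t * (∫ u in (max t s)..1, (α u - β u) ^ 2 / (f u) ^ 2) * f s

namespace Stmt19Aux

/-- `G(x) = ∫_x^1 (A−B)²/F²`. -/
def Gaux (A B F : ℝ → ℝ) (x : ℝ) : ℝ := ∫ u in x..1, (A u - B u) ^ 2 / (F u) ^ 2

theorem key (A B F : ℝ → ℝ) (hA : Continuous A) (hB : Continuous B) (hF : Continuous F)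
    (hFpos : ∀ t, 0 < F t) :
    IntegrableOn (fun p : ℝ × ℝ => (Rker A B F p.1 p.2) ^ 2)
      (Set.Icc 0 1 ×ˢ Set.Icc 0 1) ∧
    ∫ t in (0:ℝ)..1, Rker A B F t t
      = (∫ t in (0:ℝ)..1, (A t - B t))
        + ∫ t in (0:ℝ)..1, (∫ u in (0:ℝ)..t, (F u) ^ 2) / (F t) ^ 2 * (A t - B t) ^ 2 := by
  have hFne : ∀ t, F t ≠ 0 := fun t => (hFpos t).ne'
  have hg : Continuous (fun u => (A u - B u) ^ 2 / (F u) ^ 2) :=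
    ((hA.sub hB).pow 2).div (hF.pow 2) (fun u => pow_ne_zero 2 (hFne u))
  have hF2 : Continuous (fun u => (F u) ^ 2) := hF.pow 2
  -- derivative of Gaux
  have hGder : ∀ x : ℝ, HasDerivAt (Gaux A B F) (-((A x - B x) ^ 2 / (F x) ^ 2)) x := by
    intro x
    have hP : HasDerivAt (fun y => ∫ u in (1:ℝ)..y, (A u - B u) ^ 2 / (F u) ^ 2)
        ((A x - B x) ^ 2 / (F x) ^ 2) x :=
      intervalIntegral.integral_hasDerivAt_right (hg.intervalIntegrable 1 x)
        (hg.stronglyMeasurableAtFilter _ _) hg.continuousAt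
    have : Gaux A B F = fun y => -∫ u in (1:ℝ)..y, (A u - B u) ^ 2 / (F u) ^ 2 := by
      funext y; rw [Gaux, intervalIntegral.integral_symm]
    rw [this]
    exact hP.neg
  have hGcont : Continuous (Gaux A B F) :=
    continuous_iff_continuousAt.2 fun x => (hGder x).continuousAt
  -- continuity of the kernel
  have hmax : Continuous (fun p : ℝ × ℝ => max p.1 p.2) := continuous_fst.max continuous_snd
  have hmin : Continuous (fun p : ℝ × ℝ => min p.1 p.2) := continuous_fst.min continuous_snd
  have hRcont : Continuous (fun p : ℝ × ℝ => Rker A B F p.1 p.2) := by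
    have : (fun p : ℝ × ℝ => Rker A B F p.1 p.2)
        = fun p : ℝ × ℝ =>
          (A (max p.1 p.2) - B (max p.1 p.2)) * F (min p.1 p.2) / F (max p.1 p.2)
            + F p.1 * Gaux A B F (max p.1 p.2) * F p.2 := rfl
    rw [this]
    exact ((((hA.comp hmax).sub (hB.comp hmax)).mul (hF.comp hmin)).div (hF.comp hmax)
        (fun p => hFne _)).add
      (((hF.comp continuous_fst).mul (hGcont.comp hmax)).mul (hF.comp continuous_snd))
  refine ⟨(hRcont.pow 2).continuousOn.integrableOn_compact (isCompact_Icc.prod isCompact_Icc), ?_⟩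
  -- diagonal values
  have hdiag : ∀ t : ℝ, Rker A B F t t = (A t - B t) + (F t) ^ 2 * Gaux A B F t := by
    intro t
    show (A (max t t) - B (max t t)) * F (min t t) / F (max t t)
        + F t * Gaux A B F (max t t) * F t = _
    rw [max_self, min_self, mul_div_assoc, div_self (hFne t), mul_one]
    ring
  rw [intervalIntegral.integral_congr (g := fun t => (A t - B t) + (F t) ^ 2 * Gaux A B F t)
    (fun t _ => hdiag t)]
  rw [intervalIntegral.integral_add (f := fun t => A t - B t) (g := fun t => F t ^ 2 * Gaux A B F t) ((hA.sub hB).intervalIntegrable 0 1)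
    ((hF2.mul hGcont).intervalIntegrable 0 1)]
  congr 1
  -- now the integration by parts identity
  have hhder : ∀ x : ℝ, HasDerivAt (fun y => ∫ u in (0:ℝ)..y, (F u) ^ 2) ((F x) ^ 2) x :=
    fun x => intervalIntegral.integral_hasDerivAt_right (hF2.intervalIntegrable 0 x)
      (hF2.stronglyMeasurableAtFilter _ _) hF2.continuousAt
  have hhcont : Continuous (fun y => ∫ u in (0:ℝ)..y, (F u) ^ 2) :=
    continuous_iff_continuousAt.2 fun x => (hhder x).continuousAt
  have hibp := intervalIntegral.integral_mul_deriv_eq_deriv_mul (a := 0) (b := 1)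
    (u := fun y => ∫ u in (0:ℝ)..y, (F u) ^ 2) (v := Gaux A B F)
    (u' := fun x => (F x) ^ 2) (v' := fun x => -((A x - B x) ^ 2 / (F x) ^ 2))
    (fun x _ => hhder x) (fun x _ => hGder x)
    (hF2.intervalIntegrable 0 1) (hg.neg.intervalIntegrable 0 1)
  simp only [intervalIntegral.integral_same, Gaux, mul_zero, zero_mul, zero_sub,
    intervalIntegral.integral_same] at hibp
  -- hibp : ∫ x in 0..1, (∫ u in 0..x, F u ^2) * -( (A x - B x)^2 / F x ^2 )
  --        = - something - ∫ x in 0..1, F x ^2 * Gaux x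
  have h1 : (∫ x in (0:ℝ)..1, (∫ u in (0:ℝ)..x, (F u) ^ 2) * -((A x - B x) ^ 2 / (F x) ^ 2))
      = -∫ x in (0:ℝ)..1, (∫ u in (0:ℝ)..x, (F u) ^ 2) / (F x) ^ 2 * (A x - B x) ^ 2 := by
    rw [← intervalIntegral.integral_neg]
    apply intervalIntegral.integral_congr
    intro x _
    ring
  rw [h1] at hibp
  show (∫ x in (0:ℝ)..1, F x ^ 2 * ∫ u in x..1, (A u - B u) ^ 2 / (F u) ^ 2)
      = ∫ t in (0:ℝ)..1, (∫ u in (0:ℝ)..t, (F u) ^ 2) / (F t) ^ 2 * (A t - B t) ^ 2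
  linarith [hibp]

end Stmt19Aux

end

section Main

/-- For `α, β` continuous and `f` continuous positive on `[0,1]`, the kernel `R` is
square-integrable on `[0,1]²` (so the associated integral operator on `L²[0,1]` is
Hilbert–Schmidt, hence compact), and it is of trace class with trace
`∫₀¹ R(t,t) dt = ∫₀¹(α−β) + ∫₀¹ (h/f²)(α−β)²` where `h(t) = ∫₀ᵗ f²`. -/
theorem stmt_19 (α β f : ℝ → ℝ)
    (hα : ContinuousOn α (Set.Icc 0 1)) (hβ : ContinuousOn β (Set.Icc 0 1))
    (hf : ContinuousOn f (Set.Icc 0 1)) (hfpos : ∀ t ∈ Set.Icc (0:ℝ) 1, 0 < f t) :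
    IntegrableOn (fun p : ℝ × ℝ => (Rker α β f p.1 p.2) ^ 2)
      (Set.Icc 0 1 ×ˢ Set.Icc 0 1) ∧
    ∫ t in (0:ℝ)..1, Rker α β f t t
      = (∫ t in (0:ℝ)..1, (α t - β t))
        + ∫ t in (0:ℝ)..1, (∫ u in (0:ℝ)..t, (f u) ^ 2) / (f t) ^ 2 * (α t - β t) ^ 2 := by
  set c : ℝ → ℝ := fun t => min (max t 0) 1 with hc_def
  have hc : Continuous c := (continuous_id.max continuous_const).min continuous_const
  have hcmem : ∀ t, c t ∈ Set.Icc (0:ℝ) 1 := fun t =>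
    ⟨le_min (le_max_right t 0) zero_le_one, min_le_right _ 1⟩
  have hcid : ∀ t ∈ Set.Icc (0:ℝ) 1, c t = t := by
    intro t ht
    simp only [hc_def]
    rw [max_eq_left ht.1, min_eq_left ht.2]
  set A : ℝ → ℝ := fun t => α (c t) with hA_def
  set B : ℝ → ℝ := fun t => β (c t) with hB_def
  set F : ℝ → ℝ := fun t => f (c t) with hF_def
  have hA : Continuous A := hα.comp_continuous hc hcmem
  have hB : Continuous B := hβ.comp_continuous hc hcmem
  have hF : Continuous F := hf.comp_continuous hc hcmem
  have hFpos' : ∀ t, 0 < F t := fun t => hfpos _ (hcmem t)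
  have heq : ∀ t ∈ Set.Icc (0:ℝ) 1, ∀ s ∈ Set.Icc (0:ℝ) 1,
      Rker α β f t s = Rker A B F t s := by
    intro t ht s hs
    have hmx : max t s ∈ Set.Icc (0:ℝ) 1 := ⟨le_max_of_le_left ht.1, max_le ht.2 hs.2⟩
    have hmn : min t s ∈ Set.Icc (0:ℝ) 1 := ⟨le_min ht.1 hs.1, min_le_of_left_le ht.2⟩
    have hint : (∫ u in (max t s)..1, (α u - β u) ^ 2 / (f u) ^ 2)
        = ∫ u in (max t s)..1, (A u - B u) ^ 2 / (F u) ^ 2 := by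
      apply intervalIntegral.integral_congr
      intro u hu
      rw [Set.uIcc_of_le hmx.2] at hu
      have hu' : u ∈ Set.Icc (0:ℝ) 1 := ⟨le_trans hmx.1 hu.1, hu.2⟩
      simp only [hA_def, hB_def, hF_def, hcid u hu']
    simp only [Rker, hint, hA_def, hB_def, hF_def, hcid _ hmx, hcid _ hmn,
      hcid t ht, hcid s hs]
  obtain ⟨h1, h2⟩ := Stmt19Aux.key A B F hA hB hF hFpos'
  constructor
  · refine h1.congr_fun ?_ (measurableSet_Icc.prod measurableSet_Icc)
    intro p hp
    have hp' := Set.mem_prod.1 hp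
    simp only
    rw [heq p.1 hp'.1 p.2 hp'.2]
  · have hd : ∀ t ∈ Set.uIcc (0:ℝ) 1, Rker α β f t t = Rker A B F t t := by
      intro t ht
      rw [Set.uIcc_of_le zero_le_one] at ht
      exact heq t ht t ht
    rw [intervalIntegral.integral_congr hd, h2]
    congr 1
    · apply intervalIntegral.integral_congr
      intro t ht
      rw [Set.uIcc_of_le zero_le_one] at ht
      simp only [hA_def, hB_def, hcid t ht]
    · apply intervalIntegral.integral_congr
      intro t ht
      rw [Set.uIcc_of_le zero_le_one] at ht
      have hint : (∫ u in (0:ℝ)..t, (F u) ^ 2) = ∫ u in (0:ℝ)..t, (f u) ^ 2 := by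
        apply intervalIntegral.integral_congr
        intro u hu
        rw [Set.uIcc_of_le ht.1] at hu
        have hu' : u ∈ Set.Icc (0:ℝ) 1 := ⟨hu.1, le_trans hu.2 ht.2⟩
        simp only [hF_def, hcid u hu']
      beta_reduce
      rw [hint]
      simp only [hint, hA_def, hB_def, hF_def, hcid t ht]

end Main
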